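/- Let x₁, x₂, x₃ : [0,∞) → ℝ with x₂ differentiable, x₂'(t) = r(x₂(t),x₃(t))·x₁(t) − d·x₂(t) for all t ≥ 0, and 0 ≤ x₁(t) ≤ 1, x₂(t) ≥ 0, x₃(t) ≥ 0 for all t ≥ 0. Then for all t ≥ 0, x₂(t) ≤ (c₁/d)·(1 − e^{−dt}) + x₂(0)·e^{−dt}. -/

import Mathlib

open Set Real

/-- upper bound on `x₂` by the solution of the comparison ODE
`z' = c₁ - d z`. -/
theorem stmt_4
    (c₁ d c₂ c₃ : ℝ) (hc₁ : 0 < c₁) (hd : 0 < d) (hc₂ : 0 ≤ c₂) (hc₃ : 0 ≤ c₃)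
    (x₁ x₂ x₃ : ℝ → ℝ)
    (hx₂ : ∀ t ≥ (0:ℝ), HasDerivAt x₂
      (c₁ / (1 + c₂ * x₂ t + c₃ * x₃ t) * x₁ t - d * x₂ t) t)
    (hb : ∀ t ≥ (0:ℝ), 0 ≤ x₁ t ∧ x₁ t ≤ 1 ∧ 0 ≤ x₂ t ∧ 0 ≤ x₃ t) :
    ∀ t ≥ (0:ℝ), x₂ t ≤ c₁ / d * (1 - Real.exp (-d * t))
      + x₂ 0 * Real.exp (-d * t) := by
  set f : ℝ → ℝ := fun t => (x₂ t - c₁ / d) * Real.exp (d * t) with hf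
  have hderiv : ∀ t ≥ (0:ℝ), HasDerivAt f
      ((c₁ / (1 + c₂ * x₂ t + c₃ * x₃ t) * x₁ t - c₁) * Real.exp (d * t)) t := by
    intro t ht
    have h1 : HasDerivAt (fun t => x₂ t - c₁ / d)
        (c₁ / (1 + c₂ * x₂ t + c₃ * x₃ t) * x₁ t - d * x₂ t) t :=
      (hx₂ t ht).sub_const _
    have h2 : HasDerivAt (fun t => Real.exp (d * t)) (d * Real.exp (d * t)) t := by
      have := (Real.hasDerivAt_exp (d * t)).comp t ((hasDerivAt_id t).const_mul d)
      simpa [mul_comm, Function.comp_def] using this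
    have := h1.mul h2
    refine this.congr_deriv ?_
    have hcd : c₁ / d * d = c₁ := div_mul_cancel₀ c₁ hd.ne'
    linear_combination (-Real.exp (d * t)) * hcd
  have hd' : ∀ t ∈ interior (Ici (0:ℝ)), deriv f t ≤ 0 := by
    intro t ht
    rw [interior_Ici] at ht
    have ht' : (0:ℝ) ≤ t := le_of_lt ht
    rw [(hderiv t ht').deriv]
    obtain ⟨h1, h2, h3, h4⟩ := hb t ht'
    have hden : (1:ℝ) ≤ 1 + c₂ * x₂ t + c₃ * x₃ t := by nlinarith [mul_nonneg hc₂ h3, mul_nonneg hc₃ h4]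
    have hr : 0 ≤ c₁ / (1 + c₂ * x₂ t + c₃ * x₃ t) := by positivity
    have : c₁ / (1 + c₂ * x₂ t + c₃ * x₃ t) * x₁ t ≤ c₁ := by
      calc c₁ / (1 + c₂ * x₂ t + c₃ * x₃ t) * x₁ t
          ≤ c₁ / (1 + c₂ * x₂ t + c₃ * x₃ t) := mul_le_of_le_one_right hr h2
        _ ≤ c₁ := div_le_self hc₁.le hden
    have he : 0 < Real.exp (d * t) := Real.exp_pos _
    nlinarith
  have hcont : ContinuousOn f (Ici (0:ℝ)) := by
    intro t ht
    exact ((hderiv t ht).continuousAt).continuousWithinAt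
  have hmono : AntitoneOn f (Ici (0:ℝ)) :=
    antitoneOn_of_deriv_nonpos (convex_Ici 0) hcont
      (fun t ht => by
        rw [interior_Ici] at ht
        exact (hderiv t ht.le).differentiableAt.differentiableWithinAt) hd'
  intro t ht
  have hle : f t ≤ f 0 := hmono (self_mem_Ici) ht ht
  have he : 0 < Real.exp (d * t) := Real.exp_pos _
  have hexp : Real.exp (-d * t) = (Real.exp (d * t))⁻¹ := by
    rw [← Real.exp_neg]; ring_nf
  simp only [hf, mul_zero, Real.exp_zero, mul_one] at hle
  rw [hexp]
  have hinv : (Real.exp (d * t))⁻¹ * Real.exp (d * t) = 1 := inv_mul_cancel₀ he.ne'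
  have hinvpos : 0 < (Real.exp (d * t))⁻¹ := inv_pos.mpr he
  have key := mul_le_mul_of_nonneg_right hle hinvpos.le
  rw [mul_assoc, mul_inv_cancel₀ he.ne', mul_one] at key
  nlinarith [key]
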